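/- Let M_1,...,M_r ∈ GL(n; ℂ), λ ∈ ℂ*, and let N_k ∈ GL(nr; ℂ) be the convolution matrices: N_k equals the identity except in the k-th block row, which is (λ(M_1−1), ..., λ M_k, ..., M_r−1) (entries λ(M_j−1) for j < k, λM_k at position k, M_j−1 for j > k). Decompose M_k − 1 = P_k Q_k with Q_k S_k = I_{n_k} (n_k = rank(M_k−1)), and set Q = diag(Q_1,...,Q_r), S = diag(S_1,...,S_r). Then Q N_k S = Ñ_k, where Ñ_k equals the identity except in the k-th block row, which is (λ Q_k P_1, ..., λ(Q_k P_k + 1), ..., Q_k P_r). -/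

import Mathlib

open Matrix


private lemma collapse1 {r n : ℕ} (i : Fin r) (f : Fin r → Fin n → ℂ) :
    ∑ x : Fin r × Fin n, (if i = x.1 then f x.1 x.2 else 0) = ∑ x2, f i x2 := by
  rw [Fintype.sum_prod_type, Finset.sum_comm]
  simp

private lemma collapse2 {r n : ℕ} (j : Fin r) (f : Fin r → Fin n → ℂ) :
    ∑ x : Fin r × Fin n, (if x.1 = j then f x.1 x.2 else 0) = ∑ x2, f j x2 := by
  rw [Fintype.sum_prod_type, Finset.sum_comm]
  simp


/-- 𝒦-reduction of the multiplicative convolution: `Q N_k S = Ñ_k`. -/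
theorem stmt_5 (r n : ℕ) (nk : Fin r → ℕ) (lam : ℂ) (hlam : lam ≠ 0) (k : Fin r)
    (M : Fin r → Matrix (Fin n) (Fin n) ℂ) (hM : ∀ i, IsUnit (M i))
    (hrank : ∀ i, (M i - 1).rank = nk i)
    (P : ∀ i, Matrix (Fin n) (Fin (nk i)) ℂ)
    (Qm : ∀ i, Matrix (Fin (nk i)) (Fin n) ℂ)
    (hPQ : ∀ i, M i - 1 = P i * Qm i)
    (S : ∀ i, Matrix (Fin n) (Fin (nk i)) ℂ)
    (hQS : ∀ i, Qm i * S i = 1)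
    (N : Matrix (Fin r × Fin n) (Fin r × Fin n) ℂ)
    (hN : N = Matrix.of fun p q =>
        if p.1 = k then
          (if q.1 < k then lam * (M q.1 - 1) p.2 q.2
           else if q.1 = k then lam * M k p.2 q.2
           else (M q.1 - 1) p.2 q.2)
        else (1 : Matrix (Fin r × Fin n) (Fin r × Fin n) ℂ) p q) :
    (Matrix.of fun (p : Σ i, Fin (nk i)) (q : Fin r × Fin n) =>
        if p.1 = q.1 then Qm p.1 p.2 q.2 else 0) * N *
      (Matrix.of fun (p : Fin r × Fin n) (q : Σ i, Fin (nk i)) =>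
        if p.1 = q.1 then S q.1 p.2 q.2 else 0) =
    Matrix.of fun (p q : Σ i, Fin (nk i)) =>
        if p.1 = k then
          (if q.1 < k then lam * (Qm p.1 * P q.1) p.2 q.2
           else if q.1 = k then
             lam * ((Qm p.1 * P q.1) p.2 q.2 +
               (1 : Matrix (Σ i, Fin (nk i)) (Σ i, Fin (nk i)) ℂ) p q)
           else (Qm p.1 * P q.1) p.2 q.2)
        else (1 : Matrix (Σ i, Fin (nk i)) (Σ i, Fin (nk i)) ℂ) p q := by
  have hMS : ∀ j, (M j - 1) * S j = P j := fun j => by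
    rw [hPQ, Matrix.mul_assoc, hQS, Matrix.mul_one]
  have key : ∀ (A : Matrix (Fin n) (Fin n) ℂ) (i j : Fin r) (a : Fin (nk i)) (b : Fin (nk j)),
      (∑ y : Fin n, (∑ x : Fin n, Qm i a x * A x y) * S j y b) = (Qm i * (A * S j)) a b := by
    intro A i j a b
    simp only [mul_apply, Finset.sum_mul, Finset.mul_sum, mul_assoc]
    rw [Finset.sum_comm]
  ext ⟨i, a⟩ ⟨j, b⟩
  simp only [mul_apply, of_apply, ite_mul, zero_mul]
  rw [show (∑ y : Fin r × Fin n,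
      (∑ x : Fin r × Fin n, if i = x.1 then Qm i a x.2 * N x y else 0) *
        (if y.1 = j then S j y.2 b else 0)) =
      ∑ y : Fin r × Fin n, (if y.1 = j then
        (∑ x : Fin r × Fin n, if i = x.1 then Qm i a x.2 * N x y else 0) * S j y.2 b else 0) from
    Finset.sum_congr rfl fun y _ => by split <;> simp]
  rw [collapse2 j (fun y1 y2 => (∑ x : Fin r × Fin n,
      if i = x.1 then Qm i a x.2 * N x (y1, y2) else 0) * S j y2 b)]
  have hcol : ∀ y2 : Fin n, (∑ x : Fin r × Fin n,
      if i = x.1 then Qm i a x.2 * N x (j, y2) else 0) =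
      ∑ x2 : Fin n, Qm i a x2 * N (i, x2) (j, y2) := fun y2 =>
    collapse1 i (fun x1 x2 => Qm i a x2 * N (x1, x2) (j, y2))
  simp only [hcol]
  subst hN
  simp only [of_apply]
  rcases eq_or_ne i k with hik | hik
  · subst hik
    rcases lt_trichotomy j i with hj | hj | hj
    · simp only [eq_self_iff_true, if_true, if_pos hj]
      have h := key (lam • (M j - 1)) i j a b
      simp only [Matrix.smul_apply, smul_eq_mul] at h
      rw [h, Matrix.smul_mul, hMS, Matrix.mul_smul, Matrix.smul_apply, smul_eq_mul, mul_apply]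
    · subst hj
      simp only [eq_self_iff_true, if_true, lt_irrefl, if_false]
      have h := key (lam • M j) j j a b
      simp only [Matrix.smul_apply, smul_eq_mul] at h
      have hMk : M j * S j = P j + S j := by
        have h2 := hMS j
        rw [Matrix.sub_mul, Matrix.one_mul, sub_eq_iff_eq_add] at h2
        exact h2
      rw [h, Matrix.smul_mul, hMk, Matrix.mul_smul, Matrix.smul_apply, smul_eq_mul,
        Matrix.mul_add, hQS, Matrix.add_apply]
      simp [mul_apply, Matrix.one_apply, Sigma.ext_iff]
    · simp only [eq_self_iff_true, if_true, if_neg (not_lt.2 hj.le), if_neg (ne_of_gt hj)]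
      rw [key, hMS, mul_apply]
  · simp only [if_neg hik]
    rcases eq_or_ne i j with rfl | hij
    · have h1 : ∀ x2 y2 : Fin n, (1 : Matrix (Fin r × Fin n) (Fin r × Fin n) ℂ) (i, x2) (i, y2) =
          (1 : Matrix (Fin n) (Fin n) ℂ) x2 y2 := by
        intro x2 y2
        simp [Matrix.one_apply, Prod.ext_iff]
      simp only [h1]
      rw [key 1 i i a b, Matrix.one_mul, hQS]
      simp [Matrix.one_apply, Sigma.ext_iff]
    · have h1 : ∀ x2 y2 : Fin n, (1 : Matrix (Fin r × Fin n) (Fin r × Fin n) ℂ) (i, x2) (j, y2) =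
          0 := by
        intro x2 y2
        simp [Matrix.one_apply, Prod.ext_iff, hij]
      simp only [h1, mul_zero, Finset.sum_const_zero, zero_mul]
      simp [Matrix.one_apply, Sigma.ext_iff, hij]
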